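/- Let f be a polynomial with real coefficients that is odd (f(−x) = −f(x)) and such that Q·f has integer coefficients for some positive integer Q. Let M, C, n be positive integers. Then for every integer g, ∑_{k=g+1}^{g+Q·M·n!} sin( f(k) · 2πC/(M·n!) ) = 0. -/

import Mathlib

theorem stmt7 (f : Polynomial ℝ) (hodd : ∀ x : ℝ, f.eval (-x) = -f.eval x)
    (Q : ℕ) (hQ : 0 < Q)
    (hint : ∃ p : Polynomial ℤ, p.map (Int.castRingHom ℝ) = (Q : ℝ) • f)
    (M C n : ℕ) (hM : 0 < M) (hC : 0 < C) (hn : 0 < n) (g : ℤ) :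
    ∑ k ∈ Finset.Icc (g + 1) (g + (Q * M * n.factorial : ℕ)),
        Real.sin (f.eval (k : ℝ) * (2 * Real.pi * (C : ℝ) / ((M : ℝ) * (n.factorial : ℝ)))) =
      0 := by
  obtain ⟨p, hp⟩ := hint
  set N : ℤ := ((Q * M * n.factorial : ℕ) : ℤ) with hN
  have hNpos : 0 < N := by
    have := n.factorial_pos
    positivity
  -- evaluation of p at integers
  have hpf : ∀ m : ℤ, ((p.eval m : ℤ) : ℝ) = (Q : ℝ) * f.eval (m : ℝ) := by
    intro m
    have := congrArg (Polynomial.eval ((m : ℤ) : ℝ)) hp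
    simpa using this
  have hQne : (Q : ℝ) ≠ 0 := by positivity
  have hfp : ∀ m : ℤ, f.eval (m : ℝ) = ((p.eval m : ℤ) : ℝ) / Q := by
    intro m; rw [hpf]; field_simp
  have hpodd : ∀ m : ℤ, p.eval (-m) = - p.eval m := by
    intro m
    have : ((p.eval (-m) : ℤ) : ℝ) = ((-p.eval m : ℤ) : ℝ) := by
      push_cast
      rw [hpf m]
      have := hpf (-m)
      push_cast at this
      rw [this, hodd]
      ring
    exact_mod_cast this
  set θ : ℝ := 2 * Real.pi * (C : ℝ) / ((M : ℝ) * (n.factorial : ℝ)) with hθ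
  have hMn : ((M : ℝ) * (n.factorial : ℝ)) ≠ 0 := by
    have := n.factorial_pos; positivity
  -- key cancellation
  have key : ∀ j k : ℤ, N ∣ j + k →
      Real.sin (f.eval (j : ℝ) * θ) + Real.sin (f.eval (k : ℝ) * θ) = 0 := by
    intro j k hdvd
    have hd1 : N ∣ p.eval j + p.eval k := by
      have h1 : j - (-k) ∣ p.eval j - p.eval (-k) := Polynomial.sub_dvd_eval_sub j (-k) p
      have h2 : N ∣ p.eval j - p.eval (-k) := dvd_trans (by simpa [sub_neg_eq_add] using hdvd) h1
      simpa [hpodd k, sub_neg_eq_add] using h2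
    obtain ⟨t, ht⟩ := hd1
    -- f.eval j * θ = - f.eval k * θ + (t*C) * (2π)
    have hNQ : (N : ℝ) = (Q : ℝ) * ((M : ℝ) * (n.factorial : ℝ)) := by
      rw [hN]; push_cast; ring
    have hA : f.eval (j : ℝ) * θ = -(f.eval (k : ℝ) * θ) + ((t * C : ℤ) : ℝ) * (2 * Real.pi) := by
      rw [hfp j, hfp k, hθ]
      have hpj : ((p.eval j : ℤ) : ℝ) = (N : ℝ) * t - ((p.eval k : ℤ) : ℝ) := by
        have h2 : ((p.eval j + p.eval k : ℤ) : ℝ) = ((N * t : ℤ) : ℝ) := by exact_mod_cast congrArg (fun z : ℤ => (z : ℝ)) ht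
        push_cast at h2
        linarith
      rw [hpj, hNQ]
      push_cast
      field_simp
      ring
    rw [hA, Real.sin_add_int_mul_two_pi, Real.sin_neg]
    ring
  -- uniqueness in an interval of length N
  have huniq : ∀ a b : ℤ, a ∈ Finset.Icc (g + 1) (g + N) → b ∈ Finset.Icc (g + 1) (g + N) →
      N ∣ a - b → a = b := by
    intro a b ha hb hd
    simp only [Finset.mem_Icc] at ha hb
    have : a - b = 0 := Int.eq_zero_of_abs_lt_dvd hd (abs_lt.mpr ⟨by omega, by omega⟩)
    omega
  set σ : ℤ → ℤ := fun k => g + 1 + ((-k - (g + 1)) % N) with hσ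
  have hσmem : ∀ k, σ k ∈ Finset.Icc (g + 1) (g + N) := by
    intro k
    have h1 : 0 ≤ (-k - (g + 1)) % N := Int.emod_nonneg _ (by omega)
    have h2 : (-k - (g + 1)) % N < N := Int.emod_lt_of_pos _ hNpos
    simp only [Finset.mem_Icc, hσ]; omega
  have hσcong : ∀ k, N ∣ σ k + k := by
    intro k
    have h := Int.mul_ediv_add_emod (-k - (g + 1)) N
    exact ⟨-((-k - (g + 1)) / N), by show g + 1 + ((-k - (g + 1)) % N) + k = _; linarith⟩
  exact Finset.sum_involution (fun k _ => σ k)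
    (fun k hk => key k (σ k) (by rw [add_comm]; exact hσcong k))
    (fun k hk hne heq => hne (by
      have heq' : σ k = k := heq
      have h := key k (σ k) (by rw [add_comm]; exact hσcong k)
      rw [heq'] at h; linarith))
    (fun k _ => hσmem k)
    (fun k hk => huniq _ _ (hσmem (σ k)) hk (by
      have h := dvd_sub (hσcong (σ k)) (hσcong k)
      have h2 : σ (σ k) + σ k - (σ k + k) = σ (σ k) - k := by ring
      rw [h2] at h
      exact h))
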